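/- arXiv:1809.09923 — 3 statements merged into one kernel-verified Lean document; each statement's English description precedes it below -/
import Mathlib

section
/- Let ν be a compactly supported Borel probability measure on ℂ, let 1 < q < ∞ and C > 0. Then the set F = {z ∈ S : the projection P_z ν is absolutely continuous with density in L^q(ℝ) of L^q-norm at most C} is a closed subset of the unit circle S. -/
open MeasureTheory Complex ENNReal

/-- Extension of the testing inequality from continuous compactly supported functions to
nonnegative measurable functions in `ℒ^{q'} (μ + volume)`. -/
lemma aux_ext (μ : Measure ℝ) [IsProbabilityMeasure μ] {q C : ℝ} (hq : 1 < q) (hC : 0 < C)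
    (h : ∀ f : ℝ → ℝ, Continuous f → HasCompactSupport f → (∀ x, 0 ≤ f x) →
      ∫⁻ x, ENNReal.ofReal (f x) ∂μ ≤
        ENNReal.ofReal C * eLpNorm f (ENNReal.ofReal q.conjExponent) volume)
    {φ : ℝ → ℝ} (hφm : Measurable φ) (hφ0 : ∀ x, 0 ≤ φ x)
    (hφp : MemLp φ (ENNReal.ofReal q.conjExponent) (μ + volume)) :
    ∫⁻ x, ENNReal.ofReal (φ x) ∂μ ≤
      ENNReal.ofReal C * eLpNorm φ (ENNReal.ofReal q.conjExponent) volume := by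
  have hq' : q.HolderConjugate q.conjExponent := Real.HolderConjugate.conjExponent hq
  have h1q' : 1 < q.conjExponent := hq'.symm.lt
  set q' : ℝ := q.conjExponent with hq'def
  set p' : ℝ≥0∞ := ENNReal.ofReal q' with hp'def
  have hp'0 : p' ≠ 0 := by
    simp only [hp'def, ne_eq, ENNReal.ofReal_eq_zero, not_le]; linarith
  have hp't : p' ≠ ∞ := ENNReal.ofReal_ne_top
  have h1p' : 1 ≤ p' := ENNReal.one_le_ofReal.2 h1q'.le
  haveI hloc : IsLocallyFiniteMeasure (μ + volume) := by
    refine ⟨fun x => ?_⟩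
    obtain ⟨s, hs, hvol⟩ := (volume : Measure ℝ).finiteAt_nhds x
    exact ⟨s, hs, by
      simp only [Measure.add_apply]
      exact ENNReal.add_lt_top.2 ⟨measure_lt_top μ s, hvol⟩⟩
  
  refine ENNReal.le_of_forall_pos_le_add fun ε hε hfin => ?_
  set δ : ℝ≥0∞ := (ε : ℝ≥0∞) / (ENNReal.ofReal C + 1) with hδdef
  have hδ0 : δ ≠ 0 := by
    simp only [hδdef, ne_eq, ENNReal.div_eq_zero_iff, not_or]
    exact ⟨by exact_mod_cast hε.ne', by simp⟩
  obtain ⟨f, hf_cs, hf_close, hf_cont, -⟩ :=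
    hφp.exists_hasCompactSupport_eLpNorm_sub_le hp't hδ0
  set fp : ℝ → ℝ := fun x => max (f x) 0 with hfpdef
  have hfp_cont : Continuous fp := hf_cont.max continuous_const
  have hfp_cs : HasCompactSupport fp := by
    have : fp = (fun y => max y 0) ∘ f := rfl
    rw [this]; exact hf_cs.comp_left (by simp)
  have hfp_0 : ∀ x, 0 ≤ fp x := fun x => le_max_right _ _
  have hdiff : ∀ x, |φ x - fp x| ≤ |φ x - f x| := by
    intro x
    rcases le_or_gt 0 (f x) with hfx | hfx
    · simp [hfpdef, max_eq_left hfx, le_refl]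
    · have h1 : fp x = 0 := max_eq_right hfx.le
      rw [h1, sub_zero, _root_.abs_of_nonneg (hφ0 x)]
      have : φ x ≤ φ x - f x := by linarith
      exact this.trans (le_abs_self _)
  have key_close : eLpNorm (φ - fp) p' (μ + volume) ≤ δ :=
    le_trans (eLpNorm_mono fun x => by
      simpa [Real.norm_eq_abs] using hdiff x) hf_close
  have hcμ : eLpNorm (φ - fp) p' μ ≤ δ :=
    (eLpNorm_mono_measure _ (Measure.le_add_right le_rfl)).trans key_close
  have hcv : eLpNorm (φ - fp) p' volume ≤ δ :=
    (eLpNorm_mono_measure _ (Measure.le_add_left le_rfl)).trans key_close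
  have hφ_asm : AEStronglyMeasurable φ μ := hφm.aestronglyMeasurable
  have hsub_asm : AEStronglyMeasurable (φ - fp) μ :=
    (hφm.sub hfp_cont.measurable).aestronglyMeasurable
  -- step (a): split
  have hstepa : ∫⁻ x, ENNReal.ofReal (φ x) ∂μ ≤ ∫⁻ x, ENNReal.ofReal (fp x) ∂μ + δ := by
    have hpt : ∀ x, ENNReal.ofReal (φ x) ≤
        ENNReal.ofReal (fp x) + ENNReal.ofReal |φ x - fp x| := by
      intro x
      rw [← ENNReal.ofReal_add (hfp_0 x) (abs_nonneg _)]
      refine ENNReal.ofReal_le_ofReal ?_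
      have := le_abs_self (φ x - fp x); linarith
    calc ∫⁻ x, ENNReal.ofReal (φ x) ∂μ
        ≤ ∫⁻ x, (ENNReal.ofReal (fp x) + ENNReal.ofReal |φ x - fp x|) ∂μ :=
          lintegral_mono hpt
      _ = ∫⁻ x, ENNReal.ofReal (fp x) ∂μ + ∫⁻ x, ENNReal.ofReal |φ x - fp x| ∂μ :=
          lintegral_add_left (hfp_cont.measurable.ennreal_ofReal) _
      _ ≤ ∫⁻ x, ENNReal.ofReal (fp x) ∂μ + δ := by
          gcongr
          have heq : ∫⁻ x, ENNReal.ofReal |φ x - fp x| ∂μ = eLpNorm (φ - fp) 1 μ := by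
            rw [eLpNorm_one_eq_lintegral_enorm]
            refine lintegral_congr fun x => ?_
            rw [Pi.sub_apply, Real.enorm_eq_ofReal_abs]
          rw [heq]
          have := eLpNorm_le_eLpNorm_mul_rpow_measure_univ (μ := μ) (f := φ - fp) h1p' hsub_asm
          simp only [measure_univ, ENNReal.one_rpow, mul_one] at this
          exact this.trans hcμ
  -- step (b)
  have hstepb : ∫⁻ x, ENNReal.ofReal (fp x) ∂μ ≤
      ENNReal.ofReal C * (eLpNorm φ p' volume + δ) := by
    refine (h fp hfp_cont hfp_cs hfp_0).trans ?_
    gcongr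
    have : fp = φ - (φ - fp) := by funext x; simp
    rw [this]
    refine (eLpNorm_sub_le (hφm.aestronglyMeasurable)
      ((hφm.sub hfp_cont.measurable).aestronglyMeasurable) h1p').trans ?_
    exact add_le_add le_rfl hcv
  have hδtot : ENNReal.ofReal C * δ + δ ≤ (ε : ℝ≥0∞) := by
    have : ENNReal.ofReal C * δ + δ = (ENNReal.ofReal C + 1) * δ := by ring
    rw [this, hδdef]
    exact ENNReal.mul_div_le
  calc ∫⁻ x, ENNReal.ofReal (φ x) ∂μ
      ≤ ENNReal.ofReal C * (eLpNorm φ p' volume + δ) + δ :=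
        hstepa.trans (add_le_add hstepb le_rfl)
    _ = ENNReal.ofReal C * eLpNorm φ p' volume + (ENNReal.ofReal C * δ + δ) := by ring
    _ ≤ ENNReal.ofReal C * eLpNorm φ p' volume + ε := add_le_add le_rfl hδtot

/-- From the testing inequality, construct the `L^q` density. -/
lemma aux_key (μ : Measure ℝ) [IsProbabilityMeasure μ] {q C : ℝ} (hq : 1 < q) (hC : 0 < C)
    (h : ∀ f : ℝ → ℝ, Continuous f → HasCompactSupport f → (∀ x, 0 ≤ f x) →
      ∫⁻ x, ENNReal.ofReal (f x) ∂μ ≤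
        ENNReal.ofReal C * eLpNorm f (ENNReal.ofReal q.conjExponent) volume) :
    ∃ g : ℝ → ℝ, (∀ x, 0 ≤ g x) ∧ MemLp g (ENNReal.ofReal q) volume ∧
      μ = volume.withDensity (fun x => ENNReal.ofReal (g x)) ∧
      eLpNorm g (ENNReal.ofReal q) volume ≤ ENNReal.ofReal C := by
  have hq' : q.HolderConjugate q.conjExponent := Real.HolderConjugate.conjExponent hq
  set q' : ℝ := q.conjExponent with hq'def
  have h1q' : 1 < q' := hq'.symm.lt
  set p' : ℝ≥0∞ := ENNReal.ofReal q' with hp'def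
  have hp'0 : p' ≠ 0 := by
    simp only [hp'def, ne_eq, ENNReal.ofReal_eq_zero, not_le]; linarith
  have hp't : p' ≠ ∞ := ENNReal.ofReal_ne_top
  have hq0 : (0:ℝ) < q := lt_trans one_pos hq
  have hq10 : (0:ℝ) ≤ q - 1 := by linarith
  -- absolute continuity
  have hac : μ ≪ volume := by
    refine Measure.AbsolutelyContinuous.mk fun s hs hs0 => ?_
    set φ : ℝ → ℝ := s.indicator fun _ => (1:ℝ) with hφdef
    have hφm : Measurable φ := measurable_const.indicator hs
    have hφ0 : ∀ x, 0 ≤ φ x := fun x => Set.indicator_nonneg (fun _ _ => zero_le_one) x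
    have hφp : MemLp φ p' (μ + volume) := by
      refine memLp_indicator_const p' hs 1 (Or.inr ?_)
      simp only [Measure.add_apply, hs0, add_zero]
      exact (measure_lt_top μ s).ne
    have hkey := aux_ext μ hq hC h hφm hφ0 hφp
    have hL : ∫⁻ x, ENNReal.ofReal (φ x) ∂μ = μ s := by
      have : (fun x => ENNReal.ofReal (φ x)) = s.indicator fun _ => (1:ℝ≥0∞) := by
        funext x
        by_cases hx : x ∈ s <;> simp [hφdef, hx]
      rw [this, lintegral_indicator hs, setLIntegral_const, one_mul]
    have hR : eLpNorm φ p' volume = 0 := by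
      rw [hφdef, eLpNorm_indicator_const hs hp'0 hp't, hs0]
      rw [ENNReal.zero_rpow_of_pos (by
        rw [ENNReal.toReal_ofReal (by linarith : (0:ℝ) ≤ q')]
        positivity)]
      simp
    rw [hL, hR, mul_zero] at hkey
    exact le_antisymm hkey (zero_le)
  set g : ℝ → ℝ := fun x => (μ.rnDeriv volume x).toReal with hgdef
  have hgm : Measurable g := (Measure.measurable_rnDeriv μ volume).ennreal_toReal
  have hg0 : ∀ x, 0 ≤ g x := fun x => ENNReal.toReal_nonneg
  have hae : (fun x => ENNReal.ofReal (g x)) =ᵐ[volume] μ.rnDeriv volume := by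
    filter_upwards [Measure.rnDeriv_lt_top μ volume] with x hx
    exact ENNReal.ofReal_toReal hx.ne
  have hμeq : μ = volume.withDensity fun x => ENNReal.ofReal (g x) := by
    rw [withDensity_congr_ae hae, Measure.withDensity_rnDeriv_eq μ volume hac]
  -- the truncations
  set ψ : ℕ → ℝ → ℝ≥0∞ := fun n =>
    (Set.Icc (-(n:ℝ)) n).indicator fun x => ENNReal.ofReal (min (g x) n) ^ q with hψdef
  have hψm : ∀ n, Measurable (ψ n) :=
    fun n => (((hgm.min measurable_const).ennreal_ofReal).pow_const q).indicator
      measurableSet_Icc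
  set A : ℕ → ℝ≥0∞ := fun n => ∫⁻ x, ψ n x ∂volume with hAdef
  have hmin0 : ∀ (n : ℕ) (x : ℝ), 0 ≤ min (g x) n :=
    fun n x => le_min (hg0 x) (Nat.cast_nonneg n)
  -- claim 1
  have claim1 : ∀ n, A n ≤ ENNReal.ofReal C * A n ^ (1/q') := by
    intro n
    set φ : ℝ → ℝ := (Set.Icc (-(n:ℝ)) n).indicator fun x => min (g x) n ^ (q-1) with hφdef
    have hφm : Measurable φ :=
      ((Real.continuous_rpow_const hq10).measurable.comp
        (hgm.min measurable_const)).indicator measurableSet_Icc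
    have hφ0 : ∀ x, 0 ≤ φ x := fun x =>
      Set.indicator_nonneg (fun y _ => Real.rpow_nonneg (hmin0 n y) _) x
    have hIccfin : ((μ + volume) : Measure ℝ) (Set.Icc (-(n:ℝ)) (n:ℝ)) ≠ ⊤ := by
      simp only [Measure.add_apply]
      exact ENNReal.add_ne_top.2 ⟨(measure_lt_top μ _).ne, by
        rw [Real.volume_Icc]; exact ENNReal.ofReal_ne_top⟩
    have hφp : MemLp φ p' (μ + volume) := by
      refine MemLp.of_le (memLp_indicator_const p' measurableSet_Icc
        ((n:ℝ) ^ (q-1)) (Or.inr hIccfin)) hφm.aestronglyMeasurable ?_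
      refine ae_of_all _ fun x => ?_
      by_cases hx : x ∈ Set.Icc (-(n:ℝ)) n
      · simp only [hφdef, Set.indicator_of_mem hx, Real.norm_eq_abs]
        rw [_root_.abs_of_nonneg (Real.rpow_nonneg (hmin0 n x) _),
          _root_.abs_of_nonneg (Real.rpow_nonneg (Nat.cast_nonneg n) _)]
        exact Real.rpow_le_rpow (hmin0 n x) (min_le_right _ _) hq10
      · simp [hφdef, Set.indicator_of_notMem hx, Real.rpow_nonneg, Nat.cast_nonneg,
          abs_nonneg]
    have hkey := aux_ext μ hq hC h hφm hφ0 hφp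
    -- lower bound for LHS
    have hlow : A n ≤ ∫⁻ x, ENNReal.ofReal (φ x) ∂μ := by
      rw [hμeq, lintegral_withDensity_eq_lintegral_mul₀
        hgm.ennreal_ofReal.aemeasurable hφm.ennreal_ofReal.aemeasurable]
      refine lintegral_mono fun x => ?_
      by_cases hx : x ∈ Set.Icc (-(n:ℝ)) n
      · simp only [hψdef, hφdef, Set.indicator_of_mem hx, Pi.mul_apply]
        rw [← ENNReal.ofReal_rpow_of_nonneg (hmin0 n x) hq10]
        have h1 : ENNReal.ofReal (min (g x) n) ^ q =
            ENNReal.ofReal (min (g x) n) * ENNReal.ofReal (min (g x) n) ^ (q-1) := by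
          have : q = 1 + (q - 1) := by ring
          rw [this, ENNReal.rpow_add_of_nonneg _ _ zero_le_one hq10, ENNReal.rpow_one]
          ring_nf
        rw [h1]
        exact mul_le_mul_left (ENNReal.ofReal_le_ofReal (min_le_left _ _)) _
      · simp [hψdef, Set.indicator_of_notMem hx]
    -- upper bound for RHS
    have hup : eLpNorm φ p' volume = A n ^ (1/q') := by
      rw [eLpNorm_eq_lintegral_rpow_enorm_toReal hp'0 hp't,
        ENNReal.toReal_ofReal (by linarith : (0:ℝ) ≤ q')]
      congr 1
      refine lintegral_congr fun x => ?_
      by_cases hx : x ∈ Set.Icc (-(n:ℝ)) n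
      · simp only [hφdef, hψdef, Set.indicator_of_mem hx]
        rw [Real.enorm_eq_ofReal (Real.rpow_nonneg (hmin0 n x) _),
          ← ENNReal.ofReal_rpow_of_nonneg (hmin0 n x) hq10,
          ← ENNReal.rpow_mul, hq'.sub_one_mul_conj]
      · simp only [hφdef, hψdef, Set.indicator_of_notMem hx]
        rw [enorm_zero]
        simp [ENNReal.zero_rpow_of_pos (by linarith : (0:ℝ) < q')]
    calc A n ≤ ∫⁻ x, ENNReal.ofReal (φ x) ∂μ := hlow
      _ ≤ ENNReal.ofReal C * eLpNorm φ p' volume := hkey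
      _ = ENNReal.ofReal C * A n ^ (1/q') := by rw [hup]
  -- claim 2: finiteness
  have claim2 : ∀ n, A n ≠ ⊤ := by
    intro n
    have hb : A n ≤ ENNReal.ofReal ((n:ℝ)) ^ q * volume (Set.Icc (-(n:ℝ)) n) := by
      rw [hAdef]
      simp only [hψdef]
      rw [lintegral_indicator measurableSet_Icc]
      calc ∫⁻ x in Set.Icc (-(n:ℝ)) n, ENNReal.ofReal (min (g x) n) ^ q ∂volume
          ≤ ∫⁻ _ in Set.Icc (-(n:ℝ)) n, ENNReal.ofReal ((n:ℝ)) ^ q ∂volume := by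
            refine lintegral_mono fun x => ?_
            exact ENNReal.rpow_le_rpow
              (ENNReal.ofReal_le_ofReal (min_le_right _ _)) hq0.le
        _ = ENNReal.ofReal ((n:ℝ)) ^ q * volume (Set.Icc (-(n:ℝ)) n) :=
            setLIntegral_const _ _
    refine (lt_of_le_of_lt hb ?_).ne
    refine ENNReal.mul_lt_top ?_ ?_
    · exact ENNReal.rpow_lt_top_of_nonneg hq0.le ENNReal.ofReal_ne_top
    · rw [Real.volume_Icc]; exact ENNReal.ofReal_lt_top
  -- claim 3
  have claim3 : ∀ n, A n ≤ ENNReal.ofReal C ^ q := by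
    intro n
    by_cases h0 : A n = 0
    · rw [h0]; exact zero_le
    have hsum : 1/q' + 1/q = (1:ℝ) := by
      rw [one_div, one_div]; exact hq'.symm.inv_add_inv_eq_one
    have hsplit : A n = A n ^ (1/q') * A n ^ (1/q) := by
      rw [← ENNReal.rpow_add _ _ h0 (claim2 n), hsum]
      exact (ENNReal.rpow_one _).symm
    have hc : A n ^ (1/q') * A n ^ (1/q) ≤ A n ^ (1/q') * ENNReal.ofReal C := by
      calc A n ^ (1/q') * A n ^ (1/q) = A n := hsplit.symm
        _ ≤ ENNReal.ofReal C * A n ^ (1/q') := claim1 n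
        _ = A n ^ (1/q') * ENNReal.ofReal C := mul_comm _ _
    have hcancel : A n ^ (1/q) ≤ ENNReal.ofReal C := by
      refine (ENNReal.mul_le_mul_iff_right (a := A n ^ (1/q')) ?_ ?_).1 hc
      · exact (ENNReal.rpow_pos (lt_of_le_of_ne (zero_le) (Ne.symm h0)) (claim2 n)).ne'
      · exact ENNReal.rpow_ne_top_of_nonneg (by positivity) (claim2 n)
    have := ENNReal.rpow_le_rpow hcancel hq0.le
    rwa [one_div, ENNReal.rpow_inv_rpow hq0.ne'] at this
  -- monotone convergence
  have hmono : Monotone ψ := by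
    intro m n hmn x
    by_cases hx : x ∈ Set.Icc (-(m:ℝ)) m
    · have hx' : x ∈ Set.Icc (-(n:ℝ)) n := by
        rcases Set.mem_Icc.1 hx with ⟨h1, h2⟩
        have hcast : (m:ℝ) ≤ n := Nat.cast_le.2 hmn
        exact Set.mem_Icc.2 ⟨by linarith, by linarith⟩
      simp only [hψdef, Set.indicator_of_mem hx, Set.indicator_of_mem hx']
      refine ENNReal.rpow_le_rpow (ENNReal.ofReal_le_ofReal ?_) hq0.le
      exact min_le_min le_rfl (Nat.cast_le.2 hmn)
    · simp [hψdef, Set.indicator_of_notMem hx]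
  have hsup : ∀ x, ⨆ n, ψ n x = ENNReal.ofReal (g x) ^ q := by
    intro x
    refine le_antisymm (iSup_le fun n => ?_) ?_
    · by_cases hx : x ∈ Set.Icc (-(n:ℝ)) n
      · simp only [hψdef, Set.indicator_of_mem hx]
        exact ENNReal.rpow_le_rpow (ENNReal.ofReal_le_ofReal (min_le_left _ _)) hq0.le
      · simp [hψdef, Set.indicator_of_notMem hx]
    · set n : ℕ := ⌈|x|⌉₊ + ⌈g x⌉₊ with hndef
      have hxn : |x| ≤ (n:ℝ) := by
        refine (Nat.le_ceil _).trans ?_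
        exact_mod_cast Nat.le_add_right _ _
      have hgn : g x ≤ (n:ℝ) := by
        refine (Nat.le_ceil _).trans ?_
        exact_mod_cast Nat.le_add_left _ _
      have hx : x ∈ Set.Icc (-(n:ℝ)) n := by
        rcases abs_le.1 hxn with ⟨h1, h2⟩
        exact Set.mem_Icc.2 ⟨h1, h2⟩
      have : ψ n x = ENNReal.ofReal (g x) ^ q := by
        simp only [hψdef, Set.indicator_of_mem hx, min_eq_left hgn]
      exact this.ge.trans (le_iSup (fun n => ψ n x) n)
  have claim4 : ∫⁻ x, ENNReal.ofReal (g x) ^ q ∂volume ≤ ENNReal.ofReal C ^ q := by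
    have : ∫⁻ x, ENNReal.ofReal (g x) ^ q ∂volume = ⨆ n, A n := by
      rw [← lintegral_iSup hψm hmono]
      exact (lintegral_congr fun x => (hsup x).symm)
    rw [this]
    exact iSup_le claim3
  -- conclusion
  have hq_ne0 : ENNReal.ofReal q ≠ 0 := by
    simp only [ne_eq, ENNReal.ofReal_eq_zero, not_le]; linarith
  have claim5 : eLpNorm g (ENNReal.ofReal q) volume ≤ ENNReal.ofReal C := by
    rw [eLpNorm_eq_lintegral_rpow_enorm_toReal hq_ne0 ENNReal.ofReal_ne_top,
      ENNReal.toReal_ofReal hq0.le]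
    have heq : ∫⁻ x, ‖g x‖ₑ ^ q ∂volume = ∫⁻ x, ENNReal.ofReal (g x) ^ q ∂volume :=
      lintegral_congr fun x => by rw [Real.enorm_eq_ofReal (hg0 x)]
    rw [heq]
    have h5 := ENNReal.rpow_le_rpow claim4 (by positivity : (0:ℝ) ≤ 1/q)
    rw [one_div] at h5
    rw [ENNReal.rpow_rpow_inv hq0.ne'] at h5
    rw [one_div]
    exact h5
  exact ⟨g, hg0, ⟨hgm.aestronglyMeasurable, lt_of_le_of_lt claim5 ENNReal.ofReal_lt_top⟩,
    hμeq, claim5⟩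

lemma aux_projcont (z : ℂ) : Continuous fun w : ℂ => (z * (starRingEnd ℂ) w).re :=
  Complex.continuous_re.comp (continuous_const.mul continuous_star)

lemma aux_bridge (ν : Measure ℂ) [IsProbabilityMeasure ν] (z : ℂ) {f : ℝ → ℝ}
    (hfc : Continuous f) (hfcs : HasCompactSupport f) (hf0 : ∀ x, 0 ≤ f x) :
    ∫⁻ x, ENNReal.ofReal (f x) ∂(ν.map fun w => (z * (starRingEnd ℂ) w).re)
      = ENNReal.ofReal (∫ w, f ((z * (starRingEnd ℂ) w).re) ∂ν) := by
  haveI : IsProbabilityMeasure (ν.map fun w => (z * (starRingEnd ℂ) w).re) :=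
    Measure.isProbabilityMeasure_map (aux_projcont z).measurable.aemeasurable
  obtain ⟨M, hM⟩ := hfc.bounded_above_of_compact_support hfcs
  have hint : Integrable f (ν.map fun w => (z * (starRingEnd ℂ) w).re) :=
    (integrable_const M).mono' hfc.aestronglyMeasurable (ae_of_all _ hM)
  rw [← ofReal_integral_eq_lintegral_ofReal hint (ae_of_all _ hf0),
    integral_map (aux_projcont z).measurable.aemeasurable hfc.aestronglyMeasurable]

lemma aux_cont (ν : Measure ℂ) [IsProbabilityMeasure ν] {f : ℝ → ℝ} (hfc : Continuous f)
    (hfcs : HasCompactSupport f) :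
    Continuous fun z : ℂ => ∫ w, f ((z * (starRingEnd ℂ) w).re) ∂ν := by
  obtain ⟨M, hM⟩ := hfc.bounded_above_of_compact_support hfcs
  refine continuous_of_dominated (fun z => ?_) (fun z => ae_of_all _ fun w => hM _)
    (integrable_const M) (ae_of_all _ fun w => ?_)
  · exact (hfc.comp (aux_projcont z)).aestronglyMeasurable
  · exact hfc.comp (Complex.continuous_re.comp (continuous_mul_right _))

/-- For a compactly supported Borel probability measure `ν` on `ℂ`, `1 < q` and `C > 0`,
the set of `z` on the unit circle such that the projection `P_z ν` is absolutely continuous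
with density in `L^q(ℝ)` of norm at most `C` is closed. -/
theorem stmt0 (ν : Measure ℂ) [IsProbabilityMeasure ν]
    (hν : ∃ K : Set ℂ, IsCompact K ∧ ν Kᶜ = 0)
    (q : ℝ) (hq : 1 < q) (C : ℝ) (hC : 0 < C) :
    IsClosed {z : ℂ | ‖z‖ = 1 ∧ ∃ g : ℝ → ℝ, (∀ x, 0 ≤ g x) ∧
      MemLp g (ENNReal.ofReal q) volume ∧
      ν.map (fun w => (z * (starRingEnd ℂ) w).re) =
        volume.withDensity (fun x => ENNReal.ofReal (g x)) ∧
      eLpNorm g (ENNReal.ofReal q) volume ≤ ENNReal.ofReal C} := by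
  have hq' : q.HolderConjugate q.conjExponent := Real.HolderConjugate.conjExponent hq
  set q' : ℝ := q.conjExponent with hq'def
  have h1q' : 1 < q' := hq'.symm.lt
  set p' : ℝ≥0∞ := ENNReal.ofReal q' with hp'def
  have hp'0 : p' ≠ 0 := by
    simp only [hp'def, ne_eq, ENNReal.ofReal_eq_zero, not_le]; linarith
  have hp't : p' ≠ ∞ := ENNReal.ofReal_ne_top
  have hq0 : (0:ℝ) < q := lt_trans one_pos hq
  have hset : {z : ℂ | ‖z‖ = 1 ∧ ∃ g : ℝ → ℝ, (∀ x, 0 ≤ g x) ∧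
      MemLp g (ENNReal.ofReal q) volume ∧
      ν.map (fun w => (z * (starRingEnd ℂ) w).re) =
        volume.withDensity (fun x => ENNReal.ofReal (g x)) ∧
      eLpNorm g (ENNReal.ofReal q) volume ≤ ENNReal.ofReal C}
      = {z : ℂ | ‖z‖ = 1} ∩ ⋂ (f : ℝ → ℝ),
        ⋂ (_ : Continuous f ∧ HasCompactSupport f ∧ ∀ x, 0 ≤ f x),
        {z : ℂ | ENNReal.ofReal (∫ w, f ((z * (starRingEnd ℂ) w).re) ∂ν) ≤
          ENNReal.ofReal C * eLpNorm f p' volume} := by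
    ext z
    simp only [Set.mem_setOf_eq, Set.mem_inter_iff, Set.mem_iInter]
    constructor
    · rintro ⟨hz1, g, hg0, hgmem, hgmap, hgnorm⟩
      refine ⟨hz1, fun f hf => ?_⟩
      obtain ⟨hfc, hfcs, hf0⟩ := hf
      rw [← aux_bridge ν z hfc hfcs hf0, hgmap,
        lintegral_withDensity_eq_lintegral_mul₀
          hgmem.aestronglyMeasurable.aemeasurable.ennreal_ofReal
          hfc.measurable.ennreal_ofReal.aemeasurable]
      have hfnorm : (∫⁻ x, ENNReal.ofReal (f x) ^ q' ∂volume) ^ (1/q')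
          = eLpNorm f p' volume := by
        rw [eLpNorm_eq_lintegral_rpow_enorm_toReal hp'0 hp't,
          ENNReal.toReal_ofReal (by linarith : (0:ℝ) ≤ q')]
        congr 1
        exact lintegral_congr fun x => by rw [Real.enorm_eq_ofReal (hf0 x)]
      have hgnorm' : (∫⁻ x, ENNReal.ofReal (g x) ^ q ∂volume) ^ (1/q)
          = eLpNorm g (ENNReal.ofReal q) volume := by
        rw [eLpNorm_eq_lintegral_rpow_enorm_toReal
          (by simp only [ne_eq, ENNReal.ofReal_eq_zero, not_le]; linarith)
          ENNReal.ofReal_ne_top, ENNReal.toReal_ofReal hq0.le]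
        congr 1
        exact lintegral_congr fun x => by rw [Real.enorm_eq_ofReal (hg0 x)]
      calc ∫⁻ x, ((fun x => ENNReal.ofReal (g x)) * fun x => ENNReal.ofReal (f x)) x ∂volume
          = ∫⁻ x, ((fun x => ENNReal.ofReal (f x)) * fun x => ENNReal.ofReal (g x)) x ∂volume := by
            simp only [Pi.mul_apply, mul_comm]
        _ ≤ (∫⁻ x, ENNReal.ofReal (f x) ^ q' ∂volume) ^ (1/q') *
              (∫⁻ x, ENNReal.ofReal (g x) ^ q ∂volume) ^ (1/q) :=
            ENNReal.lintegral_mul_le_Lp_mul_Lq volume hq'.symm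
              hfc.measurable.ennreal_ofReal.aemeasurable
              hgmem.aestronglyMeasurable.aemeasurable.ennreal_ofReal
        _ = eLpNorm f p' volume * eLpNorm g (ENNReal.ofReal q) volume := by
            rw [hfnorm, hgnorm']
        _ ≤ eLpNorm f p' volume * ENNReal.ofReal C := mul_le_mul_right hgnorm _
        _ = ENNReal.ofReal C * eLpNorm f p' volume := mul_comm _ _
    · rintro ⟨hz1, hall⟩
      haveI : IsProbabilityMeasure (ν.map fun w => (z * (starRingEnd ℂ) w).re) :=
        Measure.isProbabilityMeasure_map (aux_projcont z).measurable.aemeasurable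
      obtain ⟨g, hg0, hgmem, hgmap, hgnorm⟩ :=
        aux_key (ν.map fun w => (z * (starRingEnd ℂ) w).re) hq hC
          (fun f hfc hfcs hf0 => by
            rw [aux_bridge ν z hfc hfcs hf0]
            exact hall f ⟨hfc, hfcs, hf0⟩)
      exact ⟨hz1, g, hg0, hgmem, hgmap, hgnorm⟩
  rw [hset]
  refine IsClosed.inter ?_ ?_
  · have : {z : ℂ | ‖z‖ = 1} = (fun z : ℂ => ‖z‖) ⁻¹' {1} := rfl
    rw [this]
    exact isClosed_singleton.preimage continuous_norm
  · refine isClosed_iInter fun f => ?_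
    refine isClosed_iInter fun hf => ?_
    by_cases hr : ENNReal.ofReal C * eLpNorm f p' volume = ⊤
    · have : {z : ℂ | ENNReal.ofReal (∫ w, f ((z * (starRingEnd ℂ) w).re) ∂ν) ≤
          ENNReal.ofReal C * eLpNorm f p' volume} = Set.univ :=
        Set.eq_univ_of_forall fun z => by simp [Set.mem_setOf_eq, hr]
      rw [this]; exact isClosed_univ
    · have heq : {z : ℂ | ENNReal.ofReal (∫ w, f ((z * (starRingEnd ℂ) w).re) ∂ν) ≤
          ENNReal.ofReal C * eLpNorm f p' volume} =
          (fun z : ℂ => ∫ w, f ((z * (starRingEnd ℂ) w).re) ∂ν) ⁻¹'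
            Set.Iic ((ENNReal.ofReal C * eLpNorm f p' volume).toReal) := by
        ext z
        simp [Set.mem_setOf_eq, ENNReal.ofReal_le_iff_le_toReal hr]
      rw [heq]
      exact isClosed_Iic.preimage (aux_cont ν hf.1 hf.2.1)
end

section
/- Let α ∈ S with arg α ∉ πℚ and let V be a nonempty open subset of the unit circle S. Then there exists N ≥ 1 such that for every z ∈ S there exists 1 ≤ k ≤ N with α^{-k} z ∈ V. -/
open Complex Set

/-- If `α` is on the unit circle with `arg α ∉ πℚ` and `V` is a nonempty relatively open
subset of the unit circle `S`, then there is `N ≥ 1` such that for every `z ∈ S` some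
`k` with `1 ≤ k ≤ N` has `α^{-k} z ∈ V`. -/
theorem stmt9 (α : ℂ) (hα : ‖α‖ = 1)
    (harg : ∀ s : ℚ, Complex.arg α ≠ (s : ℝ) * Real.pi)
    (V : Set ℂ) (hVsub : V ⊆ {z : ℂ | ‖z‖ = 1})
    (hVopen : ∃ U : Set ℂ, IsOpen U ∧ V = U ∩ {z : ℂ | ‖z‖ = 1})
    (hVne : V.Nonempty) :
    ∃ N : ℕ, 1 ≤ N ∧ ∀ z : ℂ, ‖z‖ = 1 →
      ∃ k : ℕ, 1 ≤ k ∧ k ≤ N ∧ α ^ (-(k : ℤ)) * z ∈ V := by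
  have hπ : (0:ℝ) < Real.pi := Real.pi_pos
  set θ := Complex.arg α with hθ
  set a : Circle := Circle.exp θ with ha
  have haα : (a : ℂ) = α := by
    rw [ha, Circle.coe_exp, hθ]
    have := Complex.norm_mul_exp_arg_mul_I α
    rw [show ‖α‖ = 1 from hα] at this
    simpa using this
  -- the additive subgroup generated by θ and 2π is dense
  set S₀ : AddSubgroup ℝ := AddSubgroup.closure {θ, 2 * Real.pi} with hS₀
  have hdense : Dense (S₀ : Set ℝ) := by
    rcases S₀.dense_or_cyclic with h | ⟨b, hb⟩
    · exact h
    · exfalso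
      have hθS : θ ∈ S₀ := AddSubgroup.subset_closure (by simp)
      have h2S : 2 * Real.pi ∈ S₀ := AddSubgroup.subset_closure (by simp)
      rw [hb] at hθS h2S
      obtain ⟨m, hm⟩ := AddSubgroup.mem_closure_singleton.mp hθS
      obtain ⟨n, hn⟩ := AddSubgroup.mem_closure_singleton.mp h2S
      rw [zsmul_eq_mul] at hm hn
      have hn0 : (n:ℝ) ≠ 0 := by
        rintro h; rw [h, zero_mul] at hn; nlinarith
      have : θ = ((2 * m / n : ℚ) : ℝ) * Real.pi := by
        have key : (n:ℝ) * θ = (m:ℝ) * (2 * Real.pi) := by rw [← hm, ← hn]; ring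
        push_cast
        field_simp
        linarith [key]
      exact harg _ this
  -- preimage subgroup
  set H : AddSubgroup ℝ :=
    { carrier := {t : ℝ | Circle.exp t ∈ Subgroup.zpowers a}
      zero_mem' := by rw [Set.mem_setOf_eq, Circle.exp_zero]; exact one_mem _
      add_mem' := fun hx hy => by
        rw [Set.mem_setOf_eq, Circle.exp_add]; exact mul_mem hx hy
      neg_mem' := fun hx => by
        rw [Set.mem_setOf_eq, Circle.exp_neg]; exact inv_mem hx } with hH
  have hS₀H : S₀ ≤ H := by
    rw [hS₀]
    refine AddSubgroup.closure_le H |>.mpr ?_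
    rintro t (rfl | rfl)
    · exact Subgroup.mem_zpowers a
    · have h1 : Circle.exp (2 * Real.pi) = 1 := by
        rw [show (2:ℝ) * Real.pi = 0 + 2 * Real.pi by ring, Circle.exp_add_two_pi,
          Circle.exp_zero]
      show Circle.exp (2 * Real.pi) ∈ Subgroup.zpowers a
      rw [h1]; exact one_mem _
  -- density of powers of a in the circle
  have hZ : Dense ((Subgroup.zpowers a : Subgroup Circle) : Set Circle) := by
    intro z
    have ht : Complex.arg (z : ℂ) ∈ closure (S₀ : Set ℝ) := hdense _
    have hz : z ∈ Circle.exp '' closure (S₀ : Set ℝ) :=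
      ⟨_, ht, Circle.exp_arg z⟩
    have h1 : Circle.exp '' closure (S₀ : Set ℝ) ⊆
        closure (Circle.exp '' (S₀ : Set ℝ)) :=
      image_closure_subset_closure_image Circle.exp.continuous
    refine closure_mono ?_ (h1 hz)
    rintro _ ⟨t, htS, rfl⟩
    exact hS₀H htS
  have hda : DenseRange ((a⁻¹) ^ · : ℤ → Circle) := by
    rw [DenseRange, ← Subgroup.coe_zpowers, Subgroup.zpowers_inv]
    exact hZ
  have hdn : DenseRange ((a⁻¹) ^ · : ℕ → Circle) := denseRange_zpow_iff_pow.mp hda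
  have hf : DenseRange (fun k : ℕ => a⁻¹ ^ (k + 1)) := by
    have : DenseRange ((Homeomorph.mulLeft (a⁻¹)) ∘ ((a⁻¹) ^ · : ℕ → Circle)) :=
      (Homeomorph.mulLeft (a⁻¹)).surjective.denseRange.comp hdn
        (Homeomorph.mulLeft (a⁻¹)).continuous
    convert this using 2 with k
    simp [pow_succ']
  -- set up the open cover
  obtain ⟨v, hv⟩ := hVne
  obtain ⟨U, hUopen, hVU⟩ := hVopen
  have hvU : v ∈ U := by rw [hVU] at hv; exact hv.1
  have hvn : ‖v‖ = 1 := hVsub hv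
  obtain ⟨ε, hε, hball⟩ := Metric.isOpen_iff.mp hUopen v hvU
  set W : ℕ → Set ℂ := fun k => (fun z : ℂ => α ^ (-((k:ℤ) + 1)) * z) ⁻¹' U with hW
  have hWopen : ∀ k, IsOpen (W k) := fun k =>
    hUopen.preimage (continuous_const.mul continuous_id)
  have hcover : Metric.sphere (0:ℂ) 1 ⊆ ⋃ k, W k := by
    intro z hz
    have hzn : ‖z‖ = 1 := mem_sphere_zero_iff_norm.mp hz
    have hz0 : z ≠ 0 := by intro h; rw [h, norm_zero] at hzn; norm_num at hzn
    set ζ : Circle := ⟨z, hz⟩ with hζ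
    set vC : Circle := ⟨v, mem_sphere_zero_iff_norm.mpr hvn⟩ with hvC
    obtain ⟨k, hk⟩ := hf.exists_dist_lt (vC * ζ⁻¹) hε
    refine mem_iUnion.mpr ⟨k, ?_⟩
    show α ^ (-((k:ℤ) + 1)) * z ∈ U
    refine hball ?_
    rw [Metric.mem_ball]
    have hcoe : ((a⁻¹ ^ (k+1) : Circle) : ℂ) = α ^ (-((k:ℤ) + 1)) := by
      have h2 : -((k:ℤ) + 1) = -(((k+1 : ℕ)):ℤ) := by push_cast; ring
      rw [h2, zpow_neg, zpow_natCast, ← inv_pow, ← haα]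
      norm_cast
    have hdist : dist (vC * ζ⁻¹) (a⁻¹ ^ (k+1)) =
        dist (α ^ (-((k:ℤ) + 1)) * z) v := by
      rw [show dist (vC * ζ⁻¹) (a⁻¹ ^ (k+1)) = dist ((vC * ζ⁻¹ : Circle) : ℂ)
          ((a⁻¹ ^ (k+1) : Circle) : ℂ) from rfl, hcoe]
      push_cast
      rw [dist_eq_norm, dist_eq_norm, ← norm_sub_rev]
      have : α ^ (-((k:ℤ) + 1)) * z - v = (α ^ (-((k:ℤ) + 1)) - v * z⁻¹) * z := by
        rw [sub_mul, mul_assoc, inv_mul_cancel₀ hz0, mul_one]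
      rw [this, norm_mul, hzn, mul_one, norm_sub_rev]
    rw [← hdist]
    exact hk
  obtain ⟨t, ht⟩ := (isCompact_sphere (0:ℂ) 1).elim_finite_subcover W hWopen hcover
  refine ⟨t.sup id + 1, le_add_self, fun z hzn => ?_⟩
  have hz : z ∈ Metric.sphere (0:ℂ) 1 := mem_sphere_zero_iff_norm.mpr hzn
  obtain ⟨k, hkt, hkz⟩ := mem_iUnion₂.mp (ht hz)
  refine ⟨k + 1, le_add_self, by
    have : k ≤ t.sup id := Finset.le_sup (f := id) hkt
    omega, ?_⟩
  rw [hVU]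
  constructor
  · rw [show (((k+1:ℕ)):ℤ) = (k:ℤ)+1 by omega]
    exact hkz
  · show ‖_‖ = 1
    rw [norm_mul, norm_zpow, hα, one_zpow, hzn, mul_one]
end

section
/- Let ν be a compactly supported Borel probability measure on ℂ, γ > 0 and C > 0. Assume that for every z ∈ S the projection P_z ν is absolutely continuous with density g_z ∈ H_γ(ℝ) and ‖g_z‖_{(γ)} ≤ C. Then for every γ' ∈ (0, γ), the map z ↦ g_z is continuous from S to (H_{γ'}(ℝ), ‖·‖_{(γ')}). -/
open MeasureTheory FourierTransform Complex

/-- Membership in the `2,γ`-Sobolev space, for real-valued functions. -/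
def MemSobolevR (γ : ℝ) (g : ℝ → ℝ) : Prop :=
  MemLp g 2 volume ∧
    Integrable (fun ξ : ℝ => ‖𝓕 (fun x => (g x : ℂ)) ξ‖ ^ 2 * (1 + ξ ^ 2) ^ γ) volume

/-- The `2,γ`-Sobolev norm, for real-valued functions. -/
noncomputable def sobolevNormR (γ : ℝ) (g : ℝ → ℝ) : ℝ :=
  (∫ ξ : ℝ, ‖𝓕 (fun x => (g x : ℂ)) ξ‖ ^ 2 * (1 + ξ ^ 2) ^ γ) ^ (1 / 2 : ℝ)

lemma lip_expI : LipschitzWith 1 (fun t : ℝ => Complex.exp (t * Complex.I)) := by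
  rw [← lipschitzOnWith_univ]
  apply convex_univ.lipschitzOnWith_of_nnnorm_hasDerivWithin_le
    (f' := fun t : ℝ => Complex.exp (t * Complex.I) * Complex.I)
  · intro x _
    have h1 : HasDerivAt (fun z : ℂ => Complex.exp (z * Complex.I))
        (Complex.exp ((x : ℂ) * Complex.I) * Complex.I) (x : ℂ) := by
      exact (Complex.hasDerivAt_exp ((x:ℂ) * Complex.I)).comp (x:ℂ)
        (hasDerivAt_mul_const Complex.I)
    exact h1.comp_ofReal.hasDerivWithinAt
  · intro x _
    simp [nnnorm, Complex.norm_exp_ofReal_mul_I]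

lemma char_lip (a b : ℝ) : ‖(𝐞 a : ℂ) - (𝐞 b : ℂ)‖ ≤ 2 * Real.pi * |a - b| := by
  have := lip_expI.dist_le_mul (2 * Real.pi * a) (2 * Real.pi * b)
  simp only [Real.fourierChar_apply]
  rw [← dist_eq_norm]
  refine le_trans this ?_
  rw [NNReal.coe_one, one_mul, Real.dist_eq, ← mul_sub, abs_mul,
    _root_.abs_of_nonneg (show (0:ℝ) ≤ 2 * Real.pi by positivity)]

lemma g_integrable (ν : Measure ℂ) [IsProbabilityMeasure ν] (z : ℂ) (g : ℝ → ℝ)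
    (hnn : ∀ x, 0 ≤ g x) (hgm : AEStronglyMeasurable g volume)
    (hd : ν.map (fun w => (z * (starRingEnd ℂ) w).re) =
      volume.withDensity (fun x => ENNReal.ofReal (g x))) :
    Integrable g volume := by
  have hP : Measurable (fun w : ℂ => (z * (starRingEnd ℂ) w).re) :=
    (Complex.continuous_re.comp (continuous_const.mul continuous_star)).measurable
  have h1 : ∫⁻ x, ENNReal.ofReal (g x) = 1 := by
    have h2 := congrArg (fun μ : Measure ℝ => μ Set.univ) hd
    simp only [Measure.map_apply hP MeasurableSet.univ, Set.preimage_univ,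
      withDensity_apply _ MeasurableSet.univ, setLIntegral_univ, measure_univ] at h2
    exact h2.symm
  refine ⟨hgm, ?_⟩
  rw [HasFiniteIntegral]
  have : ∀ x : ℝ, (‖g x‖ₑ : ENNReal) = ENNReal.ofReal (g x) := fun x =>
    Real.enorm_eq_ofReal (hnn x)
  simp only [this, h1]
  exact ENNReal.one_lt_top

lemma fourier_eq (ν : Measure ℂ) [IsProbabilityMeasure ν] (z : ℂ) (g : ℝ → ℝ)
    (hnn : ∀ x, 0 ≤ g x) (hgm : AEStronglyMeasurable g volume)
    (hd : ν.map (fun w => (z * (starRingEnd ℂ) w).re) =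
      volume.withDensity (fun x => ENNReal.ofReal (g x))) (ξ : ℝ) :
    𝓕 (fun x => (g x : ℂ)) ξ =
      ∫ w, ((𝐞 (-((z * (starRingEnd ℂ) w).re * ξ)) : Circle) : ℂ) ∂ν := by
  have hP : Measurable (fun w : ℂ => (z * (starRingEnd ℂ) w).re) :=
    (Complex.continuous_re.comp (continuous_const.mul continuous_star)).measurable
  have hcont : Continuous (fun t : ℝ => ((𝐞 (-(t * ξ)) : Circle) : ℂ)) :=
    continuous_subtype_val.comp
      (Real.continuous_fourierChar.comp (continuous_id.mul continuous_const).neg)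
  rw [Real.fourier_real_eq]
  have hmeas : AEMeasurable (fun x : ℝ => (g x).toNNReal) volume :=
    hgm.aemeasurable.real_toNNReal
  have key := integral_withDensity_eq_integral_smul₀ (μ := volume)
    (f := fun x => (g x).toNNReal) hmeas (fun t : ℝ => ((𝐞 (-(t * ξ)) : Circle) : ℂ))
  have hwd : (volume.withDensity fun x => ((g x).toNNReal : ENNReal)) =
      volume.withDensity fun x => ENNReal.ofReal (g x) := rfl
  rw [hwd] at key
  rw [← hd] at key
  rw [integral_map hP.aemeasurable hcont.aestronglyMeasurable] at key
  rw [key]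
  congr 1
  funext v
  rw [NNReal.smul_def, Real.coe_toNNReal _ (hnn v), Complex.real_smul]
  simp [Circle.smul_def, mul_comm]

lemma fourier_sub_aux (f h : ℝ → ℂ) (hf : Integrable f volume) (hh : Integrable h volume)
    (ξ : ℝ) : 𝓕 (fun x => f x - h x) ξ = 𝓕 f ξ - 𝓕 h ξ := by
  have key : ∀ (u : ℝ → ℂ), Integrable u volume →
      Integrable (fun v : ℝ => 𝐞 (-(v * ξ)) • u v) volume := by
    intro u hu
    refine Integrable.mono' hu.norm
      (((continuous_subtype_val.comp (Real.continuous_fourierChar.comp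
        (continuous_id.mul continuous_const).neg)).aestronglyMeasurable).smul
        hu.aestronglyMeasurable) (ae_of_all _ fun v => ?_)
    rw [Circle.norm_smul]
  simp only [Real.fourier_real_eq, smul_sub]
  exact integral_sub (key f hf) (key h hh)

open Filter

set_option maxHeartbeats 1000000

/-- Let `ν` be a compactly supported Borel probability measure on `ℂ`, `γ, C > 0`.  If for
every `z` on the unit circle the projection `P_z ν` has a density `g z ∈ H_γ(ℝ)` with
`‖g z‖_{(γ)} ≤ C`, then for every `γ' ∈ (0, γ)` the map `z ↦ g z` is continuous from the
circle to `(H_{γ'}(ℝ), ‖·‖_{(γ')})`. -/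
theorem stmt10 (ν : Measure ℂ) [IsProbabilityMeasure ν]
    (hν : ∃ K : Set ℂ, IsCompact K ∧ ν Kᶜ = 0)
    (γ C : ℝ) (hγ : 0 < γ) (hC : 0 < C)
    (g : ℂ → ℝ → ℝ) (hg0 : ∀ z, ‖z‖ = 1 → ∀ x, 0 ≤ g z x)
    (hmem : ∀ z, ‖z‖ = 1 → MemSobolevR γ (g z))
    (hdens : ∀ z, ‖z‖ = 1 →
      ν.map (fun w => (z * (starRingEnd ℂ) w).re) =
        volume.withDensity (fun x => ENNReal.ofReal (g z x)))
    (hbd : ∀ z, ‖z‖ = 1 → sobolevNormR γ (g z) ≤ C) :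
    ∀ γ' : ℝ, 0 < γ' → γ' < γ →
      ∀ z : ℂ, ‖z‖ = 1 → ∀ ε : ℝ, 0 < ε → ∃ δ : ℝ, 0 < δ ∧
        ∀ z' : ℂ, ‖z'‖ = 1 → ‖z' - z‖ < δ →
          sobolevNormR γ' (fun x => g z' x - g z x) < ε := by
  obtain ⟨K, hKc, hKn⟩ := hν
  obtain ⟨M0, hM0⟩ := hKc.isBounded.exists_norm_le
  set M : ℝ := max M0 1 with hMdef
  have hM1 : (1:ℝ) ≤ M := le_max_right _ _
  have hMpos : (0:ℝ) < M := lt_of_lt_of_le one_pos hM1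
  have hMK : ∀ w ∈ K, ‖w‖ ≤ M := fun w hw => (hM0 w hw).trans (le_max_left _ _)
  have haeK : ∀ᵐ w ∂ν, w ∈ K := by
    rw [ae_iff]
    exact hKn
  intro γ' hγ'0 hγ'γ z hz ε hε
  -- basic integrability facts
  have hasm : ∀ y : ℂ, ‖y‖ = 1 → Integrable (fun x => ((g y x : ℝ) : ℂ)) volume := fun y hy =>
    (g_integrable ν y (g y) (hg0 y hy) ((hmem y hy).1.aestronglyMeasurable) (hdens y hy)).ofReal
  have hFc : ∀ y : ℂ, ‖y‖ = 1 → Continuous (𝓕 (fun x => ((g y x : ℝ) : ℂ))) := fun y hy =>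
    VectorFourier.fourierIntegral_continuous Real.continuous_fourierChar
      (by exact continuous_inner) (hasm y hy)
  have hwc : Continuous (fun ξ : ℝ => (1 + ξ^2)^γ') :=
    (continuous_const.add (continuous_pow 2)).rpow_const (fun ξ => Or.inr hγ'0.le)
  -- pointwise bound on the difference of Fourier transforms
  have hdiff : ∀ y : ℂ, ‖y‖ = 1 → ∀ y' : ℂ, ‖y'‖ = 1 → ∀ ξ : ℝ,
      ‖𝓕 (fun x => ((g y' x : ℝ) : ℂ)) ξ - 𝓕 (fun x => ((g y x : ℝ) : ℂ)) ξ‖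
        ≤ 2 * Real.pi * M * |ξ| * ‖y' - y‖ := by
    intro y hy y' hy' ξ
    rw [fourier_eq ν y' (g y') (hg0 y' hy') ((hmem y' hy').1.aestronglyMeasurable)
        (hdens y' hy') ξ,
      fourier_eq ν y (g y) (hg0 y hy) ((hmem y hy).1.aestronglyMeasurable) (hdens y hy) ξ]
    have hi : ∀ u : ℂ, Integrable
        (fun w : ℂ => ((𝐞 (-((u * (starRingEnd ℂ) w).re * ξ)) : Circle) : ℂ)) ν := by
      intro u
      refine Integrable.mono' (integrable_const 1) ?_ (ae_of_all _ fun w => ?_)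
      · exact (continuous_subtype_val.comp (Real.continuous_fourierChar.comp
          (((Complex.continuous_re.comp (continuous_const.mul continuous_star)).mul
            continuous_const).neg))).aestronglyMeasurable
      · simp [Circle.norm_coe]
    rw [← integral_sub (hi y') (hi y)]
    refine le_trans (norm_integral_le_of_norm_le
      (integrable_const (2 * Real.pi * M * |ξ| * ‖y' - y‖) (μ := ν))
      (haeK.mono fun w hw => ?_)) ?_
    swap
    · rw [integral_const, probReal_univ, one_smul]
    refine le_trans (char_lip _ _) ?_
    have h1 : (-((y' * (starRingEnd ℂ) w).re * ξ)) - (-((y * (starRingEnd ℂ) w).re * ξ))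
        = -(((y' - y) * (starRingEnd ℂ) w).re * ξ) := by
      rw [sub_mul, Complex.sub_re]
      ring
    rw [h1, abs_neg, abs_mul]
    have h2 : |((y' - y) * (starRingEnd ℂ) w).re| ≤ ‖y' - y‖ * M := by
      refine le_trans (Complex.abs_re_le_norm _) ?_
      rw [norm_mul]
      have h3 : ‖(starRingEnd ℂ) w‖ ≤ M := by
        rw [Complex.norm_conj]
        exact hMK w hw
      have h4 : ‖y' - y‖ = ‖y' - y‖ := rfl
      rw [h4]
      exact mul_le_mul_of_nonneg_left h3 (norm_nonneg _)
    have hπ : (0:ℝ) < Real.pi := Real.pi_pos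
    nlinarith [abs_nonneg ξ, norm_nonneg (y' - y), abs_nonneg (((y' - y) * (starRingEnd ℂ) w).re),
      mul_le_mul_of_nonneg_left (mul_le_mul_of_nonneg_right h2 (abs_nonneg ξ))
        (by positivity : (0:ℝ) ≤ 2 * Real.pi)]
  -- integral bound from hbd
  have hIbd : ∀ y : ℂ, ‖y‖ = 1 →
      ∫ ξ : ℝ, ‖𝓕 (fun x => ((g y x : ℝ) : ℂ)) ξ‖^2 * (1 + ξ^2)^γ ≤ C^2 := by
    intro y hy
    have h := hbd y hy
    rw [sobolevNormR] at h
    have hnn : 0 ≤ ∫ ξ : ℝ, ‖𝓕 (fun x => ((g y x : ℝ) : ℂ)) ξ‖^2 * (1 + ξ^2)^γ :=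
      integral_nonneg fun ξ => by positivity
    by_contra hcon
    push_neg at hcon
    have h5 := Real.rpow_lt_rpow (by positivity) hcon (by norm_num : (0:ℝ) < 1/2)
    rw [← Real.rpow_natCast C 2, ← Real.rpow_mul hC.le] at h5
    norm_num at h5
    exact absurd h (not_le.2 h5)
  -- integrability of the γ'-weighted square
  have hint' : ∀ y : ℂ, ‖y‖ = 1 → Integrable
      (fun ξ : ℝ => ‖𝓕 (fun x => ((g y x : ℝ) : ℂ)) ξ‖^2 * (1 + ξ^2)^γ') volume := by
    intro y hy
    refine Integrable.mono' (hmem y hy).2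
      ((((hFc y hy).norm.pow 2).mul hwc).aestronglyMeasurable) (ae_of_all _ fun ξ => ?_)
    rw [Real.norm_eq_abs, _root_.abs_of_nonneg (by positivity)]
    have hb : (1 + ξ^2)^γ' ≤ (1 + ξ^2)^γ :=
      Real.rpow_le_rpow_of_exponent_le (by nlinarith [sq_nonneg ξ]) hγ'γ.le
    have : (0:ℝ) ≤ ‖𝓕 (fun x => ((g y x : ℝ) : ℂ)) ξ‖^2 := by positivity
    nlinarith
  -- choose R
  have htend : Tendsto (fun R : ℝ => 4 * C^2 * (1 + R^2)^(γ'-γ)) atTop (nhds 0) := by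
    have h1 : Tendsto (fun R : ℝ => 1 + R^2) atTop atTop :=
      tendsto_atTop_add_const_left _ 1 (tendsto_pow_atTop two_ne_zero)
    have h2 := (tendsto_rpow_neg_atTop (by linarith : 0 < γ - γ')).comp h1
    have h3 : (fun R : ℝ => (1 + R^2)^(γ'-γ))
        = (fun x : ℝ => x ^ (-(γ - γ'))) ∘ (fun R : ℝ => 1 + R^2) := by
      funext R
      simp only [Function.comp_apply]
      congr 1
      ring
    have h4 : Tendsto (fun R : ℝ => (1 + R^2)^(γ'-γ)) atTop (nhds 0) := by
      rw [h3]; exact h2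
    simpa using h4.const_mul (4 * C^2)
  obtain ⟨R, hRboth⟩ := ((htend.eventually_lt_const (by positivity : (0:ℝ) < ε^2/2)).and
    (eventually_ge_atTop (1:ℝ))).exists
  obtain ⟨hRtail, hR1⟩ := hRboth
  have hRpos : (0:ℝ) < R := lt_of_lt_of_le one_pos hR1
  -- choose δ
  have hπ : (0:ℝ) < Real.pi := Real.pi_pos
  set A : ℝ := 2 * R * ((2 * Real.pi * M * R)^2 * (1 + R^2)^γ') with hAdef
  have hApos : 0 < A := by positivity
  set δ : ℝ := Real.sqrt (ε^2 / 2 / A) with hδdef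
  have hδpos : 0 < δ := Real.sqrt_pos.2 (div_pos (by positivity) hApos)
  have hδsq : A * δ^2 = ε^2 / 2 := by
    rw [hδdef, Real.sq_sqrt (le_of_lt (div_pos (by positivity) hApos)),
      mul_comm, div_mul_cancel₀ _ (ne_of_gt hApos)]
  refine ⟨δ, hδpos, ?_⟩
  intro z' hz' hzz'
  -- the difference Fourier transform
  set D : ℝ → ℂ := fun ξ =>
    𝓕 (fun x => ((g z' x : ℝ) : ℂ)) ξ - 𝓕 (fun x => ((g z x : ℝ) : ℂ)) ξ with hDdef
  have hD : ∀ ξ, 𝓕 (fun x => ((g z' x - g z x : ℝ) : ℂ)) ξ = D ξ := by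
    intro ξ
    have hcast : (fun x : ℝ => ((g z' x - g z x : ℝ) : ℂ))
        = fun x => ((g z' x : ℝ) : ℂ) - ((g z x : ℝ) : ℂ) := by
      funext x; push_cast; ring
    rw [hcast]
    exact fourier_sub_aux _ _ (hasm z' hz') (hasm z hz) ξ
  set f : ℝ → ℝ := fun ξ => ‖D ξ‖^2 * (1 + ξ^2)^γ' with hfdef
  have hfnn : ∀ ξ, 0 ≤ f ξ := fun ξ => by positivity
  have hDc : Continuous D := (hFc z' hz').sub (hFc z hz)
  have hfm : AEStronglyMeasurable f volume := ((hDc.norm.pow 2).mul hwc).aestronglyMeasurable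
  have hDsq : ∀ ξ, ‖D ξ‖^2 ≤ 2 * ‖𝓕 (fun x => ((g z' x : ℝ) : ℂ)) ξ‖^2
      + 2 * ‖𝓕 (fun x => ((g z x : ℝ) : ℂ)) ξ‖^2 := by
    intro ξ
    have h1 := norm_sub_le (𝓕 (fun x => ((g z' x : ℝ) : ℂ)) ξ) (𝓕 (fun x => ((g z x : ℝ) : ℂ)) ξ)
    have h2 : ‖D ξ‖ = ‖𝓕 (fun x => ((g z' x : ℝ) : ℂ)) ξ - 𝓕 (fun x => ((g z x : ℝ) : ℂ)) ξ‖ := rfl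
    have h3 : ‖D ξ‖^2 ≤ (‖𝓕 (fun x => ((g z' x : ℝ) : ℂ)) ξ‖
        + ‖𝓕 (fun x => ((g z x : ℝ) : ℂ)) ξ‖)^2 := by
      rw [h2]
      exact pow_le_pow_left₀ (norm_nonneg _) h1 2
    nlinarith [sq_nonneg (‖𝓕 (fun x => ((g z' x : ℝ) : ℂ)) ξ‖
      - ‖𝓕 (fun x => ((g z x : ℝ) : ℂ)) ξ‖)]
  have hfint : Integrable f volume := by
    refine Integrable.mono' (((hint' z' hz').const_mul 2).add ((hint' z hz).const_mul 2)) hfm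
      (ae_of_all _ fun ξ => ?_)
    rw [Real.norm_eq_abs, _root_.abs_of_nonneg (hfnn ξ)]
    have h1 := hDsq ξ
    have hw0 : (0:ℝ) ≤ (1 + ξ^2)^γ' := by positivity
    simp only [hfdef, Pi.add_apply]
    nlinarith [mul_le_mul_of_nonneg_right h1 hw0]
  -- split the integral
  set s : Set ℝ := Metric.closedBall (0:ℝ) R with hsdef
  have hsm : MeasurableSet s := measurableSet_closedBall
  have hsplit : ∫ ξ, f ξ = (∫ ξ in s, f ξ) + ∫ ξ in sᶜ, f ξ := (integral_add_compl hsm hfint).symm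
  -- main part
  have hmain : ∫ ξ in s, f ξ < ε^2/2 := by
    have hB : ∀ ξ ∈ s, ‖f ξ‖ ≤ (2 * Real.pi * M * R * ‖z' - z‖)^2 * (1 + R^2)^γ' := by
      intro ξ hξ
      have hξR : |ξ| ≤ R := by
        rw [hsdef, Metric.mem_closedBall, Real.dist_eq, sub_zero] at hξ
        exact hξ
      have h1 : ‖D ξ‖ ≤ 2 * Real.pi * M * R * ‖z' - z‖ := by
        refine le_trans (hdiff z hz z' hz' ξ) ?_
        gcongr
      have h2 : (1 + ξ^2)^γ' ≤ (1 + R^2)^γ' := by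
        apply Real.rpow_le_rpow (by positivity) _ hγ'0.le
        nlinarith [_root_.sq_abs ξ, abs_nonneg ξ]
      rw [Real.norm_eq_abs, _root_.abs_of_nonneg (hfnn ξ)]
      have hDnn := norm_nonneg (D ξ)
      have hw0 : (0:ℝ) ≤ (1 + ξ^2)^γ' := by positivity
      have hw1 : (0:ℝ) ≤ (1 + R^2)^γ' := by positivity
      calc f ξ = ‖D ξ‖^2 * (1 + ξ^2)^γ' := rfl
        _ ≤ (2 * Real.pi * M * R * ‖z' - z‖)^2 * (1 + R^2)^γ' := by
            apply mul_le_mul _ h2 hw0 (by positivity)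
            exact pow_le_pow_left₀ hDnn h1 2
    have h3 := norm_setIntegral_le_of_norm_le_const
      (show volume s < ⊤ by rw [hsdef]; exact measure_closedBall_lt_top) hB
    have hvol : volume.real s = 2 * R := by
      rw [measureReal_def, hsdef, Real.volume_closedBall, ENNReal.toReal_ofReal (by positivity)]
    rw [hvol] at h3
    have h3' := h3
    have h4 : ∫ ξ in s, f ξ ≤ ‖∫ ξ in s, f ξ‖ := le_abs_self _
    have h5 : ‖z' - z‖^2 < δ^2 := by
      have := norm_nonneg (z' - z)
      nlinarith
    have hAδ : (2 * Real.pi * M * R * ‖z' - z‖)^2 * (1 + R^2)^γ' * (2 * R) < ε^2/2 := by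
      rw [← hδsq, hAdef]
      have hw1 : (0:ℝ) < (1 + R^2)^γ' := by positivity
      nlinarith [sq_nonneg (2 * Real.pi * M * R), norm_nonneg (z' - z)]
    linarith [h3', h4, hAδ]
  -- tail part
  have htail : ∫ ξ in sᶜ, f ξ < ε^2/2 := by
    set h : ℝ → ℝ := fun ξ => (1 + R^2)^(γ'-γ) *
      (2 * (‖𝓕 (fun x => ((g z' x : ℝ) : ℂ)) ξ‖^2 * (1 + ξ^2)^γ)
        + 2 * (‖𝓕 (fun x => ((g z x : ℝ) : ℂ)) ξ‖^2 * (1 + ξ^2)^γ)) with hhdef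
    have hhint : Integrable h volume :=
      ((((hmem z' hz').2.const_mul 2).add ((hmem z hz).2.const_mul 2)).const_mul _)
    have hbound : ∀ ξ ∈ sᶜ, f ξ ≤ h ξ := by
      intro ξ hξ
      have hξR : R ≤ |ξ| := by
        rw [hsdef] at hξ
        simp only [Set.mem_compl_iff, Metric.mem_closedBall, Real.dist_eq, sub_zero,
          not_le] at hξ
        exact hξ.le
      have hsplitw : (1 + ξ^2)^γ' = (1 + ξ^2)^(γ'-γ) * (1 + ξ^2)^γ := by
        rw [← Real.rpow_add (by positivity)]
        ring_nf
      have hanti : (1 + ξ^2)^(γ'-γ) ≤ (1 + R^2)^(γ'-γ) := by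
        apply Real.rpow_le_rpow_of_nonpos (by positivity) _ (by linarith)
        nlinarith [_root_.sq_abs ξ, abs_nonneg ξ]
      have hDb := hDsq ξ
      have hwγ : (0:ℝ) ≤ (1 + ξ^2)^γ := by positivity
      have hDnn : (0:ℝ) ≤ ‖D ξ‖^2 := by positivity
      have hrnn : (0:ℝ) ≤ (1 + ξ^2)^(γ'-γ) := by positivity
      calc f ξ = ‖D ξ‖^2 * ((1 + ξ^2)^(γ'-γ) * (1 + ξ^2)^γ) := by rw [← hsplitw]
        _ ≤ (2 * ‖𝓕 (fun x => ((g z' x : ℝ) : ℂ)) ξ‖^2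
              + 2 * ‖𝓕 (fun x => ((g z x : ℝ) : ℂ)) ξ‖^2)
            * ((1 + R^2)^(γ'-γ) * (1 + ξ^2)^γ) := by
            apply mul_le_mul hDb _ (by positivity) (by positivity)
            exact mul_le_mul_of_nonneg_right hanti hwγ
        _ = h ξ := by rw [hhdef]; ring
    have h6 : ∫ ξ in sᶜ, f ξ ≤ ∫ ξ in sᶜ, h ξ :=
      setIntegral_mono_on hfint.integrableOn hhint.integrableOn hsm.compl hbound
    have h7 : ∫ ξ in sᶜ, h ξ ≤ ∫ ξ, h ξ :=
      setIntegral_le_integral hhint (ae_of_all _ fun ξ => by positivity)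
    have h8 : ∫ ξ, h ξ ≤ 4 * C^2 * (1 + R^2)^(γ'-γ) := by
      rw [hhdef]
      rw [integral_const_mul]
      have h9 : ∫ ξ : ℝ, (2 * (‖𝓕 (fun x => ((g z' x : ℝ) : ℂ)) ξ‖^2 * (1 + ξ^2)^γ)
          + 2 * (‖𝓕 (fun x => ((g z x : ℝ) : ℂ)) ξ‖^2 * (1 + ξ^2)^γ)) ≤ 4 * C^2 := by
        rw [integral_add ((hmem z' hz').2.const_mul 2) ((hmem z hz).2.const_mul 2),
          integral_const_mul, integral_const_mul]
        have := hIbd z' hz'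
        have := hIbd z hz
        linarith
      have hrnn : (0:ℝ) ≤ (1 + R^2)^(γ'-γ) := by positivity
      nlinarith
    linarith
  have htot : ∫ ξ, f ξ < ε^2 := by
    rw [hsplit]; linarith
  have hnn : 0 ≤ ∫ ξ, f ξ := integral_nonneg hfnn
  have hnorm : sobolevNormR γ' (fun x => g z' x - g z x) = (∫ ξ, f ξ)^(1/2:ℝ) := by
    rw [sobolevNormR]
    congr 1
    refine integral_congr_ae (ae_of_all _ fun ξ => ?_)
    rw [hfdef]
    simp only []
    rw [hD ξ]
  rw [hnorm]
  have hfin := Real.rpow_lt_rpow hnn htot (by norm_num : (0:ℝ) < 1/2)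
  have hε2 : ((ε^2:ℝ))^(1/2:ℝ) = ε := by
    rw [← Real.rpow_natCast ε 2, ← Real.rpow_mul hε.le]
    norm_num
  rwa [hε2] at hfin
end
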